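/- Let r = (1/9)^(1/3) − (2/9)^(1/3) + (4/9)^(1/3) (so r = (2^(1/3) − 1)^(1/3) by Ramanujan's identity). Then r^4 = (1/9)^(1/3) + 2·(2/9)^(1/3) − 2·(4/9)^(1/3), r^5 = 9^(1/3) − (2/3)^(1/3) − (4/3)^(1/3), and r^6 = 1 − 2·2^(1/3) + 4^(1/3). Equivalently, the fourth root of the first expression, the fifth root of the second, and the sixth root of the third are all equal. -/

import Mathlib

lemma cube_root_eq (y : ℝ) (hy : 0 ≤ y) : (y ^ 3 : ℝ) ^ ((1:ℝ)/3) = y := by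
  rw [← Real.rpow_natCast y 3, ← Real.rpow_mul hy]
  norm_num

theorem ramanujan_powers_four_five_six
    (r : ℝ)
    (hr : r = ((1:ℝ)/9) ^ ((1:ℝ)/3) - ((2:ℝ)/9) ^ ((1:ℝ)/3) + ((4:ℝ)/9) ^ ((1:ℝ)/3)) :
    r ^ 4 = ((1:ℝ)/9) ^ ((1:ℝ)/3) + 2 * ((2:ℝ)/9) ^ ((1:ℝ)/3) - 2 * ((4:ℝ)/9) ^ ((1:ℝ)/3)
    ∧ r ^ 5 = (9:ℝ) ^ ((1:ℝ)/3) - ((2:ℝ)/3) ^ ((1:ℝ)/3) - ((4:ℝ)/3) ^ ((1:ℝ)/3)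
    ∧ r ^ 6 = 1 - 2 * (2:ℝ) ^ ((1:ℝ)/3) + (4:ℝ) ^ ((1:ℝ)/3) := by
  set a : ℝ := (2:ℝ) ^ ((1:ℝ)/3) with ha
  set b : ℝ := (3:ℝ) ^ ((1:ℝ)/3) with hb
  have ha0 : 0 ≤ a := Real.rpow_nonneg (by norm_num) _
  have hb0 : 0 < b := Real.rpow_pos_of_pos (by norm_num) _
  have ha3 : a ^ 3 = 2 := by
    rw [ha, ← Real.rpow_natCast _ 3, ← Real.rpow_mul (by norm_num)]; norm_num
  have hb3 : b ^ 3 = 3 := by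
    rw [hb, ← Real.rpow_natCast _ 3, ← Real.rpow_mul (by norm_num)]; norm_num
  have hbne : b ≠ 0 := ne_of_gt hb0
  have e19 : ((1:ℝ)/9) ^ ((1:ℝ)/3) = 1 / b ^ 2 := by
    rw [show ((1:ℝ)/9) = (1 / b ^ 2) ^ 3 by
      rw [div_pow, one_pow, ← pow_mul]; norm_num [show b^6 = 9 by linear_combination (b^3+3)*hb3]]
    exact cube_root_eq _ (by positivity)
  have e29 : ((2:ℝ)/9) ^ ((1:ℝ)/3) = a / b ^ 2 := by
    rw [show ((2:ℝ)/9) = (a / b ^ 2) ^ 3 by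
      rw [div_pow, ← pow_mul, ha3]; norm_num [show b^6 = 9 by linear_combination (b^3+3)*hb3]]
    exact cube_root_eq _ (by positivity)
  have e49 : ((4:ℝ)/9) ^ ((1:ℝ)/3) = a ^ 2 / b ^ 2 := by
    rw [show ((4:ℝ)/9) = (a ^ 2 / b ^ 2) ^ 3 by
      rw [div_pow, ← pow_mul, ← pow_mul]
      norm_num [show b^6 = 9 by linear_combination (b^3+3)*hb3,
        show a^6 = 4 by linear_combination (a^3+2)*ha3]]
    exact cube_root_eq _ (by positivity)
  have e9 : ((9:ℝ)) ^ ((1:ℝ)/3) = b ^ 2 := by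
    rw [show ((9:ℝ)) = (b ^ 2) ^ 3 by
      rw [← pow_mul]; norm_num [show b^6 = 9 by linear_combination (b^3+3)*hb3]]
    exact cube_root_eq _ (by positivity)
  have e23 : ((2:ℝ)/3) ^ ((1:ℝ)/3) = a / b := by
    rw [show ((2:ℝ)/3) = (a / b) ^ 3 by rw [div_pow, ha3, hb3]]
    exact cube_root_eq _ (by positivity)
  have e43 : ((4:ℝ)/3) ^ ((1:ℝ)/3) = a ^ 2 / b := by
    rw [show ((4:ℝ)/3) = (a ^ 2 / b) ^ 3 by
      rw [div_pow, ← pow_mul, hb3]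
      norm_num [show a^6 = 4 by linear_combination (a^3+2)*ha3]]
    exact cube_root_eq _ (by positivity)
  have e4 : ((4:ℝ)) ^ ((1:ℝ)/3) = a ^ 2 := by
    rw [show ((4:ℝ)) = (a ^ 2) ^ 3 by
      rw [← pow_mul]; norm_num [show a^6 = 4 by linear_combination (a^3+2)*ha3]]
    exact cube_root_eq _ (by positivity)
  rw [e19, e29, e49] at hr
  refine ⟨?_, ?_, ?_⟩
  · rw [hr, e19, e29, e49]
    field_simp
    linear_combination (4 + 11*a^1 - 14*a^2 + 10*a^3 - 4*a^4 + a^5) * ha3 + (-3 - b^3 - 6*a^1 - 2*a^1*b^3 + 6*a^2 + 2*a^2*b^3) * hb3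
  · rw [hr, e9, e23, e43]
    field_simp
    linear_combination (40 - 11*a^1 - 21*a^2 + 35*a^3 - 28*a^4 + 15*a^5 - 5*a^6 + a^7) * ha3 + (-27 - 9*b^3 - 3*b^6 - b^9 + 9*a^1 + 3*a^1*b^3 + a^1*b^6 + 9*a^2 + 3*a^2*b^3 + a^2*b^6) * hb3
  · rw [hr, e4]
    field_simp
    linear_combination (40 - 78*a + 30*a^2 + 45*a^3 - 84*a^4 + 78*a^5 - 48*a^6 + 21*a^7 - 6*a^8 + a^9) * ha3 + (-27 - 9*b^3 - 3*b^6 - b^9 + 54*a + 18*a*b^3 + 6*a*b^6 + 2*a*b^9 - 27*a^2 - 9*a^2*b^3 - 3*a^2*b^6 - a^2*b^9) * hb3
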